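/- Let G : ℝ³ → ℝ (or ℝ^{3×3}) be measurable with sup_x |x|² |G(x)| =: M < ∞. Then for every x ∈ ℝ³ with x ≠ 0, ∫_{ℝ³} |G(y)| / |x − y|² dy ≤ c M / |x|, where c is an absolute constant. -/

import Mathlib

open MeasureTheory Filter Metric Set
open scoped Topology ENNReal

noncomputable section

abbrev E3 := EuclideanSpace ℝ (Fin 3)

namespace PotAux

lemma dimE3 : Module.finrank ℝ E3 = 3 := by
  simp [finrank_euclideanSpace]

lemma lpolar (f : ℝ → ℝ≥0∞) (hf : Measurable f) :
    ∫⁻ x : E3, f ‖x‖ =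
      (volume (ball (0:E3) 1) * 3) * ∫⁻ t in Ioi (0:ℝ), ENNReal.ofReal (t^2) * f t := by
  have h0 : MeasurableSet ({0}ᶜ : Set E3) := (measurableSet_singleton 0).compl
  have hmp := (volume : Measure E3).measurePreserving_homeomorphUnitSphereProd
  rw [dimE3] at hmp
  have hg : Measurable fun p : sphere (0:E3) 1 × Ioi (0:ℝ) => f p.2.1 :=
    hf.comp (measurable_subtype_coe.comp measurable_snd)
  calc ∫⁻ x : E3, f ‖x‖
      = ∫⁻ x in ({0}ᶜ : Set E3), f ‖x‖ := by
        rw [MeasureTheory.restrict_compl_singleton]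
    _ = ∫⁻ x : ({0}ᶜ : Set E3), f ‖x.1‖ ∂(volume.comap Subtype.val) :=
        (lintegral_subtype_comap h0 _).symm
    _ = ∫⁻ p : sphere (0:E3) 1 × Ioi (0:ℝ), f p.2.1
          ∂((volume : Measure E3).toSphere.prod (.volumeIoiPow 2)) := by
        rw [← hmp.lintegral_comp hg]
        exact lintegral_congr fun a => by rw [homeomorphUnitSphereProd_apply_snd_coe]
    _ = (volume : Measure E3).toSphere univ * ∫⁻ t : Ioi (0:ℝ), f t.1 ∂(Measure.volumeIoiPow 2) := by
        rw [lintegral_prod _ hg.aemeasurable]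
        simp [lintegral_const, mul_comm]
    _ = (volume (ball (0:E3) 1) * 3) * ∫⁻ t in Ioi (0:ℝ), ENNReal.ofReal (t^2) * f t := by
        rw [Measure.toSphere_apply_univ, dimE3]
        congr 1
        · ring
        · rw [Measure.volumeIoiPow,
            lintegral_withDensity_eq_lintegral_mul _
              ((measurable_subtype_coe.pow_const 2).ennreal_ofReal)
              (g := fun t : Ioi (0:ℝ) => f t.1) (hf.comp measurable_subtype_coe)]
          exact lintegral_subtype_comap measurableSet_Ioi fun t => ENNReal.ofReal (t^2) * f t

lemma K1 {r : ℝ} (hr : 0 < r) :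
    ∫⁻ z : E3, (ball (0:E3) r).indicator (fun z => (ENNReal.ofReal (‖z‖^2))⁻¹) z
      ≤ (volume (ball (0:E3) 1) * 3) * ENNReal.ofReal r := by
  have hf : Measurable fun t : ℝ => (Iio r).indicator (fun t => (ENNReal.ofReal (t^2))⁻¹) t :=
    ((measurable_id.pow_const 2).ennreal_ofReal.inv).indicator measurableSet_Iio
  have hrw : ∀ z : E3, (ball (0:E3) r).indicator (fun z => (ENNReal.ofReal (‖z‖^2))⁻¹) z
      = (Iio r).indicator (fun t => (ENNReal.ofReal (t^2))⁻¹) ‖z‖ := by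
    intro z
    by_cases h : ‖z‖ < r <;> simp [Set.indicator_apply, mem_ball_zero_iff, h]
  calc ∫⁻ z : E3, (ball (0:E3) r).indicator (fun z => (ENNReal.ofReal (‖z‖^2))⁻¹) z
      = ∫⁻ z : E3, (Iio r).indicator (fun t => (ENNReal.ofReal (t^2))⁻¹) ‖z‖ :=
        lintegral_congr hrw
    _ = (volume (ball (0:E3) 1) * 3) *
        ∫⁻ t in Ioi (0:ℝ), ENNReal.ofReal (t^2) *
          (Iio r).indicator (fun t => (ENNReal.ofReal (t^2))⁻¹) t := lpolar _ hf
    _ ≤ (volume (ball (0:E3) 1) * 3) * ENNReal.ofReal r := by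
        gcongr
        have h1 : (fun t : ℝ => ENNReal.ofReal (t^2) *
            (Iio r).indicator (fun t => (ENNReal.ofReal (t^2))⁻¹) t)
            = fun t : ℝ => (Iio r).indicator
                (fun t => ENNReal.ofReal (t^2) * (ENNReal.ofReal (t^2))⁻¹) t := by
          funext t
          by_cases h : t ∈ Iio r <;> simp [h]
        rw [h1, lintegral_indicator measurableSet_Iio, Measure.restrict_restrict measurableSet_Iio]
        have h2 : Iio r ∩ Ioi 0 = Ioo 0 r := by ext t; simp [and_comm]
        rw [h2]
        calc ∫⁻ t in Ioo (0:ℝ) r, ENNReal.ofReal (t^2) * (ENNReal.ofReal (t^2))⁻¹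
            ≤ ∫⁻ _ in Ioo (0:ℝ) r, 1 := by
              refine lintegral_mono fun t => ?_
              exact ENNReal.mul_inv_le_one _
          _ = ENNReal.ofReal r := by simp [Real.volume_Ioo]

lemma K2 {r : ℝ} (hr : 0 < r) :
    ∫⁻ z : E3, ((ball (0:E3) r)ᶜ).indicator (fun z => (ENNReal.ofReal (‖z‖^4))⁻¹) z
      ≤ (volume (ball (0:E3) 1) * 3) * ENNReal.ofReal r⁻¹ := by
  have hf : Measurable fun t : ℝ => (Ici r).indicator (fun t => (ENNReal.ofReal (t^4))⁻¹) t :=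
    ((measurable_id.pow_const 4).ennreal_ofReal.inv).indicator measurableSet_Ici
  have hrw : ∀ z : E3, ((ball (0:E3) r)ᶜ).indicator (fun z => (ENNReal.ofReal (‖z‖^4))⁻¹) z
      = (Ici r).indicator (fun t => (ENNReal.ofReal (t^4))⁻¹) ‖z‖ := by
    intro z
    by_cases h : r ≤ ‖z‖ <;> simp [Set.indicator_apply, mem_ball_zero_iff, h, not_lt.2, not_le.1]
  calc ∫⁻ z : E3, ((ball (0:E3) r)ᶜ).indicator (fun z => (ENNReal.ofReal (‖z‖^4))⁻¹) z
      = ∫⁻ z : E3, (Ici r).indicator (fun t => (ENNReal.ofReal (t^4))⁻¹) ‖z‖ :=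
        lintegral_congr hrw
    _ = (volume (ball (0:E3) 1) * 3) *
        ∫⁻ t in Ioi (0:ℝ), ENNReal.ofReal (t^2) *
          (Ici r).indicator (fun t => (ENNReal.ofReal (t^4))⁻¹) t := lpolar _ hf
    _ ≤ (volume (ball (0:E3) 1) * 3) * ENNReal.ofReal r⁻¹ := by
        gcongr
        have h1 : (fun t : ℝ => ENNReal.ofReal (t^2) *
            (Ici r).indicator (fun t => (ENNReal.ofReal (t^4))⁻¹) t)
            = fun t : ℝ => (Ici r).indicator
                (fun t => ENNReal.ofReal (t^2) * (ENNReal.ofReal (t^4))⁻¹) t := by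
          funext t
          by_cases h : t ∈ Ici r <;> simp [h]
        rw [h1, lintegral_indicator measurableSet_Ici, Measure.restrict_restrict measurableSet_Ici]
        have h2 : Ici r ∩ Ioi 0 = Ici r := inter_eq_left.2 fun t ht => lt_of_lt_of_le hr ht
        rw [h2, Measure.restrict_congr_set MeasureTheory.Ioi_ae_eq_Ici.symm]
        have h3 : ∀ t ∈ Ioi r, ENNReal.ofReal (t^2) * (ENNReal.ofReal (t^4))⁻¹
            = ENNReal.ofReal (t ^ (-2:ℝ)) := by
          intro t ht
          have htpos : 0 < t := hr.trans ht
          rw [← ENNReal.ofReal_inv_of_pos (by positivity : (0:ℝ) < t^4), ← ENNReal.ofReal_mul (by positivity)]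
          congr 1
          rw [show (-2:ℝ) = ((-2 : ℤ) : ℝ) by norm_num, Real.rpow_intCast]
          have h4 : t ^ (4:ℕ) ≠ 0 := by positivity
          field_simp
        rw [setLIntegral_congr_fun measurableSet_Ioi h3]
        have hint : IntegrableOn (fun t : ℝ => t ^ (-2:ℝ)) (Ioi r) :=
          integrableOn_Ioi_rpow_of_lt (by norm_num) hr
        rw [← ofReal_integral_eq_lintegral_ofReal hint ?pos]
        case pos =>
          filter_upwards [ae_restrict_mem measurableSet_Ioi] with t ht
          exact Real.rpow_nonneg (hr.trans ht).le _
        rw [integral_Ioi_rpow_of_lt (by norm_num) hr]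
        apply ENNReal.ofReal_le_ofReal
        rw [show (-2:ℝ)+1 = -1 by norm_num, Real.rpow_neg_one]
        simp

end PotAux


open PotAux in
/-- Potential estimate: if `|x|² |G(x)| ≤ M`, then
`∫ |G(y)|/|x−y|² dy ≤ c M / |x|` for an absolute constant `c`. -/
theorem stmt5 : ∃ c : ℝ, 0 < c ∧ ∀ (G : E3 → ℝ) (M : ℝ), Measurable G →
    (∀ x : E3, ‖x‖ ^ 2 * |G x| ≤ M) →
    ∀ x : E3, x ≠ 0 → (∫ y : E3, |G y| / ‖x - y‖ ^ 2) ≤ c * M / ‖x‖ := by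
  set V : ℝ := (volume (ball (0:E3) 1)).toReal with hVdef
  have hVfin : volume (ball (0:E3) 1) ≠ ⊤ := measure_ball_lt_top.ne
  have hVpos : 0 < V := ENNReal.toReal_pos (measure_ball_pos _ _ one_pos).ne' hVfin
  have hC : volume (ball (0:E3) 1) * 3 = ENNReal.ofReal (3 * V) := by
    rw [ENNReal.ofReal_mul (by norm_num), ENNReal.ofReal_toReal hVfin,
      ENNReal.ofReal_ofNat, mul_comm]
  refine ⟨24 * V, by positivity, ?_⟩
  intro G M hGm hG x hx
  have hM : 0 ≤ M := by simpa using hG 0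
  have hxp : 0 < ‖x‖ := norm_pos_iff.2 hx
  set r : ℝ := ‖x‖ / 2 with hrdef
  have hrp : 0 < r := by positivity
  have hmeas : Measurable fun y : E3 => |G y| / ‖x - y‖ ^ 2 :=
    hGm.abs.div (((measurable_const.sub measurable_id).norm).pow_const 2)
  rw [integral_eq_lintegral_of_nonneg_ae (ae_of_all _ fun y => by positivity)
    hmeas.aestronglyMeasurable]
  refine ENNReal.toReal_le_of_le_ofReal (by positivity) ?_
  have mInv2 : Measurable fun y : E3 => (ENNReal.ofReal (‖y‖^2))⁻¹ :=
    (measurable_norm.pow_const 2).ennreal_ofReal.inv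
  have mInv2x : Measurable fun y : E3 => (ENNReal.ofReal (‖x - y‖^2))⁻¹ :=
    (((measurable_const.sub measurable_id).norm).pow_const 2).ennreal_ofReal.inv
  have mInv4 : Measurable fun y : E3 => (ENNReal.ofReal (‖y‖^4))⁻¹ :=
    (measurable_norm.pow_const 4).ennreal_ofReal.inv
  have mInv4x : Measurable fun y : E3 => (ENNReal.ofReal (‖x - y‖^4))⁻¹ :=
    (((measurable_const.sub measurable_id).norm).pow_const 4).ennreal_ofReal.inv
  set F : E3 → ℝ≥0∞ := fun y => (ENNReal.ofReal (‖y‖^2))⁻¹ * (ENNReal.ofReal (‖x - y‖^2))⁻¹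
    with hF
  have mF : Measurable F := mInv2.mul mInv2x
  set A : ℝ := 4 / ‖x‖^2 with hAdef
  have hA : 0 ≤ A := by positivity
  set h1 : E3 → ℝ≥0∞ := fun y =>
    (ball x r).indicator (fun y => ENNReal.ofReal A * (ENNReal.ofReal (‖x - y‖^2))⁻¹) y with hh1
  set h2 : E3 → ℝ≥0∞ := fun y =>
    (ball (0:E3) r).indicator (fun y => ENNReal.ofReal A * (ENNReal.ofReal (‖y‖^2))⁻¹) y with hh2
  set h3 : E3 → ℝ≥0∞ := fun y =>
    ((ball (0:E3) r)ᶜ).indicator (fun y => (ENNReal.ofReal (‖y‖^4))⁻¹) y with hh3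
  set h4 : E3 → ℝ≥0∞ := fun y =>
    ((ball x r)ᶜ).indicator (fun y => (ENNReal.ofReal (‖x - y‖^4))⁻¹) y with hh4
  have mh1 : Measurable h1 := (measurable_const.mul mInv2x).indicator measurableSet_ball
  have mh2 : Measurable h2 := (measurable_const.mul mInv2).indicator measurableSet_ball
  have mh3 : Measurable h3 := mInv4.indicator measurableSet_ball.compl
  have mh4 : Measurable h4 := mInv4x.indicator measurableSet_ball.compl
  have memx : ∀ y : E3, y ∈ ball x r ↔ ‖x - y‖ < r := by
    intro y; rw [mem_ball, dist_eq_norm, norm_sub_rev]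
  have invle : ∀ {s t : ℝ}, 0 < s → s ≤ t →
      (ENNReal.ofReal (t^2))⁻¹ ≤ (ENNReal.ofReal (s^2))⁻¹ := by
    intro s t hs hst
    have h2 : s ^ 2 ≤ t ^ 2 := by nlinarith
    gcongr
  have hrA : (ENNReal.ofReal (r^2))⁻¹ = ENNReal.ofReal A := by
    rw [← ENNReal.ofReal_inv_of_pos (by positivity)]
    congr 1
    rw [hAdef, hrdef, div_pow, inv_div]
    norm_num
  have sq_inv_eq : ∀ t : ℝ,
      (ENNReal.ofReal (t^2))⁻¹ * (ENNReal.ofReal (t^2))⁻¹ = (ENNReal.ofReal (t^4))⁻¹ := by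
    intro t
    rw [← ENNReal.mul_inv (Or.inr ENNReal.ofReal_ne_top) (Or.inl ENNReal.ofReal_ne_top),
      ← ENNReal.ofReal_mul (by positivity)]
    congr 2
    ring
  -- step 1 : pointwise a.e. bound by M * F
  have step1 : ∀ᵐ y : E3, ENNReal.ofReal (|G y| / ‖x - y‖ ^ 2) ≤ ENNReal.ofReal M * F y := by
    filter_upwards [compl_mem_ae_iff.2 (measure_singleton (0:E3))] with y hy
    have hy0 : y ≠ 0 := hy
    by_cases hxy : ‖x - y‖ = 0
    · simp [hxy]
    · have hb : 0 < ‖x - y‖ := lt_of_le_of_ne (norm_nonneg _) (Ne.symm hxy)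
      have ha : 0 < ‖y‖ := norm_pos_iff.2 hy0
      have hGy : |G y| ≤ M / ‖y‖^2 := by
        rw [le_div_iff₀ (by positivity)]
        calc |G y| * ‖y‖^2 = ‖y‖^2 * |G y| := mul_comm _ _
          _ ≤ M := hG y
      calc ENNReal.ofReal (|G y| / ‖x - y‖ ^ 2)
          = ENNReal.ofReal |G y| * (ENNReal.ofReal (‖x - y‖^2))⁻¹ := by
            rw [ENNReal.ofReal_div_of_pos (by positivity), div_eq_mul_inv]
        _ ≤ ENNReal.ofReal (M / ‖y‖^2) * (ENNReal.ofReal (‖x - y‖^2))⁻¹ :=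
            mul_le_mul_left (ENNReal.ofReal_le_ofReal hGy) _
        _ = ENNReal.ofReal M * F y := by
            rw [ENNReal.ofReal_div_of_pos (by positivity), div_eq_mul_inv, hF, mul_assoc]
  -- step 2 : pointwise bound of F by the four pieces
  have step2 : ∀ y : E3, F y ≤ h1 y + h2 y + h3 y + h4 y := by
    intro y
    rcases lt_or_ge ‖x - y‖ r with hb | hb
    · have hmem : y ∈ ball x r := (memx y).2 hb
      have htri : ‖x‖ ≤ ‖x - y‖ + ‖y‖ := by
        calc ‖x‖ = ‖(x - y) + y‖ := by rw [sub_add_cancel]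
          _ ≤ ‖x - y‖ + ‖y‖ := norm_add_le _ _
      have hage : r ≤ ‖y‖ := by rw [hrdef] at *; linarith
      have key : F y ≤ h1 y := by
        rw [hh1]
        simp only [indicator_of_mem hmem]
        exact mul_le_mul_left ((invle hrp hage).trans hrA.le) _
      exact key.trans (le_add_right (le_add_right (le_add_right le_rfl)))
    · rcases lt_or_ge ‖y‖ r with ha | ha
      · have hmem : y ∈ ball (0:E3) r := mem_ball_zero_iff.2 ha
        have key : F y ≤ h2 y := by
          rw [hh2]
          simp only [indicator_of_mem hmem]
          calc F y = (ENNReal.ofReal (‖x - y‖^2))⁻¹ * (ENNReal.ofReal (‖y‖^2))⁻¹ := mul_comm _ _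
            _ ≤ ENNReal.ofReal A * (ENNReal.ofReal (‖y‖^2))⁻¹ :=
              mul_le_mul_left ((invle hrp hb).trans hrA.le) _
        exact key.trans (le_add_right (le_add_right le_add_self))
      · rcases le_total ‖y‖ ‖x - y‖ with hab | hba
        · have hmem : y ∈ (ball (0:E3) r)ᶜ := fun hm =>
            absurd (mem_ball_zero_iff.1 hm) (not_lt.2 ha)
          have key : F y ≤ h3 y := by
            rw [hh3]
            simp only [indicator_of_mem hmem]
            calc F y ≤ (ENNReal.ofReal (‖y‖^2))⁻¹ * (ENNReal.ofReal (‖y‖^2))⁻¹ :=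
                mul_le_mul_right (invle (hrp.trans_le ha) hab) _
              _ = (ENNReal.ofReal (‖y‖^4))⁻¹ := sq_inv_eq _
          exact key.trans (le_add_right le_add_self)
        · have hmem : y ∈ (ball x r)ᶜ := fun hm =>
            absurd ((memx y).1 hm) (not_lt.2 hb)
          have key : F y ≤ h4 y := by
            rw [hh4]
            simp only [indicator_of_mem hmem]
            calc F y ≤ (ENNReal.ofReal (‖x - y‖^2))⁻¹ * (ENNReal.ofReal (‖x - y‖^2))⁻¹ :=
                mul_le_mul_left (invle (hrp.trans_le hb) hba) _
              _ = (ENNReal.ofReal (‖x - y‖^4))⁻¹ := sq_inv_eq _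
          exact key.trans le_add_self
  -- values of the four integrals
  have hpull : ∀ (s : Set E3) (f : E3 → ℝ≥0∞),
      (fun z => s.indicator (fun z => ENNReal.ofReal A * f z) z)
        = fun z => ENNReal.ofReal A * s.indicator f z := by
    intro s f
    funext z
    by_cases h : z ∈ s <;> simp [h]
  have hT : ENNReal.ofReal A * ((volume (ball (0:E3) 1) * 3) * ENNReal.ofReal r)
      = ENNReal.ofReal (6 * V / ‖x‖) := by
    rw [hC, ← ENNReal.ofReal_mul (by positivity), ← ENNReal.ofReal_mul hA]
    congr 1
    rw [hAdef, hrdef]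
    field_simp
    ring
  have hT' : (volume (ball (0:E3) 1) * 3) * ENNReal.ofReal r⁻¹
      = ENNReal.ofReal (6 * V / ‖x‖) := by
    rw [hC, ← ENNReal.ofReal_mul (by positivity)]
    congr 1
    rw [hrdef]
    field_simp
    ring
  have I1 : ∫⁻ y, h1 y ≤ ENNReal.ofReal (6 * V / ‖x‖) := by
    have hcomp : h1 = fun y =>
        (fun z => (ball (0:E3) r).indicator
          (fun z => ENNReal.ofReal A * (ENNReal.ofReal (‖z‖^2))⁻¹) z) (x - y) := by
      funext y
      by_cases hm : ‖x - y‖ < r <;>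
        simp [hh1, indicator_apply, mem_ball_zero_iff, (memx y), hm]
    rw [hcomp, (Measure.measurePreserving_sub_left volume x).lintegral_comp
      (f := (ball (0:E3) r).indicator (fun z => ENNReal.ofReal A * (ENNReal.ofReal (‖z‖^2))⁻¹))
      ((measurable_const.mul mInv2).indicator measurableSet_ball), hpull,
      lintegral_const_mul _ (mInv2.indicator measurableSet_ball), ← hT]
    exact mul_le_mul_right (K1 hrp) _
  have I2 : ∫⁻ y, h2 y ≤ ENNReal.ofReal (6 * V / ‖x‖) := by
    rw [hh2, hpull, lintegral_const_mul _ (mInv2.indicator measurableSet_ball), ← hT]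
    exact mul_le_mul_right (K1 hrp) _
  have I3 : ∫⁻ y, h3 y ≤ ENNReal.ofReal (6 * V / ‖x‖) := by
    rw [hh3, ← hT']
    exact K2 hrp
  have I4 : ∫⁻ y, h4 y ≤ ENNReal.ofReal (6 * V / ‖x‖) := by
    have hcomp : h4 = fun y =>
        (fun z => ((ball (0:E3) r)ᶜ).indicator
          (fun z => (ENNReal.ofReal (‖z‖^4))⁻¹) z) (x - y) := by
      funext y
      by_cases hm : ‖x - y‖ < r <;>
        simp [hh4, indicator_apply, mem_ball_zero_iff, (memx y), hm]
    rw [hcomp, (Measure.measurePreserving_sub_left volume x).lintegral_comp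
      (mInv4.indicator measurableSet_ball.compl), ← hT']
    exact K2 hrp
  have mainbound : ∫⁻ y, F y ≤ ENNReal.ofReal (24 * V / ‖x‖) := by
    calc ∫⁻ y, F y ≤ ∫⁻ y, (h1 y + h2 y + h3 y + h4 y) := lintegral_mono step2
      _ = (∫⁻ y, h1 y) + (∫⁻ y, h2 y) + (∫⁻ y, h3 y) + (∫⁻ y, h4 y) := by
          rw [lintegral_add_left (f := fun y => h1 y + h2 y + h3 y) ((mh1.add mh2).add mh3),
            lintegral_add_left (f := fun y => h1 y + h2 y) (mh1.add mh2),
            lintegral_add_left mh1]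
      _ ≤ ENNReal.ofReal (6 * V / ‖x‖) + ENNReal.ofReal (6 * V / ‖x‖)
          + ENNReal.ofReal (6 * V / ‖x‖) + ENNReal.ofReal (6 * V / ‖x‖) := by
          gcongr
      _ = ENNReal.ofReal (24 * V / ‖x‖) := by
          rw [← ENNReal.ofReal_add (by positivity) (by positivity),
            ← ENNReal.ofReal_add (by positivity) (by positivity),
            ← ENNReal.ofReal_add (by positivity) (by positivity)]
          congr 1
          ring
  calc ∫⁻ y, ENNReal.ofReal (|G y| / ‖x - y‖ ^ 2)
      ≤ ∫⁻ y, ENNReal.ofReal M * F y := lintegral_mono_ae step1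
    _ = ENNReal.ofReal M * ∫⁻ y, F y := lintegral_const_mul _ mF
    _ ≤ ENNReal.ofReal M * ENNReal.ofReal (24 * V / ‖x‖) := by gcongr
    _ ≤ ENNReal.ofReal (24 * V * M / ‖x‖) := by
        rw [← ENNReal.ofReal_mul hM]
        exact ENNReal.ofReal_le_ofReal (le_of_eq (by ring))
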